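/- Let T and T' be maximally reduced MUL-trees with I(T) = I(T'). Then there is a bijection φ between the set of internal edges of T and the set of internal edges of T' with the following property: if (u,v) is an internal edge of T and (u',v') = φ(u,v), then (after suitable orientation) M_u^{uv} = M_{u'}^{u'v'} and M_v^{uv} = M_{v'}^{u'v'}; in particular Δ(u,v) = Δ(u',v'). -/

import Mathlib

open SimpleGraph

variable {V V' L L' : Type}

/-- Degree of a vertex, via `Set.ncard` of the neighbor set (no instances needed). -/
noncomputable def deg (G : SimpleGraph V) (v : V) : ℕ := (G.neighborSet v).ncard

/-- A leaf is a vertex of degree one. -/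
def IsLeaf (G : SimpleGraph V) (v : V) : Prop := deg G v = 1

/-- The vertex set of the subtree `T_u^{uv}`: vertices reachable from `u`
after deleting the edge `(u,v)`. -/
def side (G : SimpleGraph V) (u v : V) : Set V :=
  {w | (G.deleteEdges {s(u, v)}).Reachable w u}

/-- Labels appearing on leaves of the `u`-side of the edge `(u,v)`. -/
def sideLabels (G : SimpleGraph V) (ψ : V → L) (u v : V) : Set L :=
  {m | ∃ w, IsLeaf G w ∧ w ∈ side G u v ∧ ψ w = m}

/-- `M_u^{uv}`: labels appearing on leaves of `T_u^{uv}` but not of `T_v^{uv}`. -/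
def Mside (G : SimpleGraph V) (ψ : V → L) (u v : V) : Set L :=
  sideLabels G ψ u v \ sideLabels G ψ v u

/-- `C^{uv}`: labels appearing on leaves of both sides of the edge `(u,v)`. -/
def Cside (G : SimpleGraph V) (ψ : V → L) (u v : V) : Set L :=
  sideLabels G ψ u v ∩ sideLabels G ψ v u

/-- A quartet `ab|cd`: an unordered pair of unordered pairs of labels. -/
abbrev Quartet (L : Type) := Sym2 (Sym2 L)

/-- The edge `(u,v)` resolves the quartet `q = ab|cd` when `{a,b} ⊆ M_u^{uv}` and
`{c,d} ⊆ M_v^{uv}` (with `a,b,c,d` four distinct labels). -/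
def Resolves (G : SimpleGraph V) (ψ : V → L) (u v : V) (q : Quartet L) : Prop :=
  G.Adj u v ∧ ∃ a b c d : L, a ≠ b ∧ c ≠ d ∧
    a ∈ Mside G ψ u v ∧ b ∈ Mside G ψ u v ∧
    c ∈ Mside G ψ v u ∧ d ∈ Mside G ψ v u ∧
    q = s(s(a, b), s(c, d))

/-- `Δ(u,v)`: the set of quartets resolved by the edge `(u,v)`. -/
def Δ (G : SimpleGraph V) (ψ : V → L) (u v : V) : Set (Quartet L) :=
  {q | Resolves G ψ u v q}

/-- The information content `I(T)`: all quartets resolved by some edge. -/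
def infoContent (G : SimpleGraph V) (ψ : V → L) : Set (Quartet L) :=
  {q | ∃ u v, Resolves G ψ u v q}

/-- The label set `M`: labels carried by the leaves. -/
def labelSet (G : SimpleGraph V) (ψ : V → L) : Set L :=
  {m | ∃ v, IsLeaf G v ∧ ψ v = m}

/-- Singly labeled: the labeling map is injective on leaves. -/
def SinglyLabeled (G : SimpleGraph V) (ψ : V → L) : Prop :=
  ∀ v w, IsLeaf G v → IsLeaf G w → ψ v = ψ w → v = w

/-- A MUL-tree: a finite unrooted tree (encoded as the nontrivial connected component
of `G`; vertices outside `G.support` are unused isolated vertices) together with a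
labeling `ψ` of its leaves, such that every internal (non-leaf) node has degree ≥ 3.
The label set `M` is `labelSet G ψ`, onto which `ψ` (restricted to leaves) is
automatically surjective. -/
structure MulTree (V L : Type) : Type where
  G : SimpleGraph V
  ψ : V → L
  fin : Finite V
  acyclic : G.IsAcyclic
  conn : ∀ u ∈ G.support, ∀ v ∈ G.support, G.Reachable u v
  internal3 : ∀ v ∈ G.support, ¬ IsLeaf G v → 3 ≤ deg G v

/-- `y` lies on the (unique) path between `a` and `b`: `a,b` are connected and
every walk from `a` to `b` passes through `y`. -/
def OnPath (G : SimpleGraph V) (y a b : V) : Prop :=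
  G.Reachable a b ∧ ∀ p : G.Walk a b, y ∈ p.support

/-- The edges `(u,v)` and `(w,x)` lie, in this order, on the path
`P_{u,x} = (u, v, …, w, x)` (possibly `v = w`). -/
def PathConfig (G : SimpleGraph V) (u v w x : V) : Prop :=
  G.Adj u v ∧ G.Adj w x ∧ OnPath G v u x ∧ OnPath G w v x

/-- An internal edge: both endpoints are internal (non-leaf) nodes. -/
def InternalEdge (G : SimpleGraph V) (a b : V) : Prop :=
  G.Adj a b ∧ ¬ IsLeaf G a ∧ ¬ IsLeaf G b

/-- Contracting the edge `(a,b)`: identify `b` with `a` (the vertex `b` becomes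
an unused isolated vertex). -/
def contractEdge (G : SimpleGraph V) (a b : V) : SimpleGraph V where
  Adj x y := x ≠ y ∧ x ≠ b ∧ y ≠ b ∧
    (G.Adj x y ∨ (x = a ∧ G.Adj b y) ∨ (y = a ∧ G.Adj x b))
  symm := by
    constructor
    rintro x y ⟨h1, h2, h3, h4 | ⟨hx, hy⟩ | ⟨hy, hx⟩⟩
    · exact ⟨h1.symm, h3, h2, Or.inl h4.symm⟩
    · exact ⟨h1.symm, h3, h2, Or.inr (Or.inr ⟨hx, hy.symm⟩)⟩
    · exact ⟨h1.symm, h3, h2, Or.inr (Or.inl ⟨hy, hx.symm⟩)⟩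
  loopless := ⟨fun x h => h.1 rfl⟩

/-- `PruneSpec G v₀ G'` : `G'` is the result of pruning the leaf `v₀` from `G`:
delete `v₀` (i.e. its unique edge); if as a result the neighbor `u` of `v₀`
becomes a degree-two node, additionally delete `u` and connect its former two
other neighbors by an edge. Deleted vertices become unused isolated vertices. -/
def PruneSpec (G : SimpleGraph V) (v₀ : V) (G' : SimpleGraph V) : Prop :=
  ∃ u, G.neighborSet v₀ = {u} ∧
    ((deg G u ≠ 3 ∧ G' = G.deleteEdges {s(u, v₀)}) ∨
     (deg G u = 3 ∧ ∃ p q, p ≠ q ∧ p ≠ v₀ ∧ q ≠ v₀ ∧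
        G.neighborSet u = {v₀, p, q} ∧
        G' = G.deleteEdges {s(u, v₀), s(u, p), s(u, q)} ⊔ fromEdgeSet {s(p, q)}))

/-- A leaf is prunable if pruning it leaves the information content unchanged. -/
def Prunable (G : SimpleGraph V) (ψ : V → L) (v₀ : V) : Prop :=
  IsLeaf G v₀ ∧ ∃ G', PruneSpec G v₀ G' ∧ infoContent G' ψ = infoContent G ψ

/-- An internal edge is contractible if contracting it leaves the information
content unchanged. -/
def Contractible (G : SimpleGraph V) (ψ : V → L) (a b : V) : Prop :=
  InternalEdge G a b ∧ infoContent (contractEdge G a b) ψ = infoContent G ψ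

/-- Maximally reduced: no prunable leaf and no contractible internal edge. -/
def MaximallyReduced (G : SimpleGraph V) (ψ : V → L) : Prop :=
  (∀ v, ¬ Prunable G ψ v) ∧ (∀ a b, ¬ Contractible G ψ a b)

/-- One reduction step: prune a prunable leaf or contract a contractible
internal edge. -/
def ReduceStep (ψ : V → L) (G G' : SimpleGraph V) : Prop :=
  (∃ v₀, Prunable G ψ v₀ ∧ PruneSpec G v₀ G') ∨
  (∃ a b, Contractible G ψ a b ∧ G' = contractEdge G a b)

/-- `H` is a maximally reduced form (MRF) of `G`: obtained from `G` by repeatedly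
pruning prunable leaves and contracting contractible internal edges, until
neither operation is possible. -/
def IsMRF (ψ : V → L) (G H : SimpleGraph V) : Prop :=
  Relation.ReflTransGen (ReduceStep ψ) G H ∧ MaximallyReduced H ψ

/-- Label-preserving isomorphism of (leaf-labeled) trees: a graph isomorphism
between the supports mapping leaves to leaves and preserving leaf labels. -/
def LIso (G : SimpleGraph V) (ψ : V → L) (G' : SimpleGraph V') (ψ' : V' → L) : Prop :=
  ∃ f : G.support ≃ G'.support,
    (∀ x y : G.support, G'.Adj (f x).1 (f y).1 ↔ G.Adj x.1 y.1) ∧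
    (∀ x : G.support, IsLeaf G x.1 → IsLeaf G' (f x).1 ∧ ψ' (f x).1 = ψ x.1)

/-- The set of internal edges of `G`, as unordered pairs. -/
def internalEdgeSet (G : SimpleGraph V) : Set (Sym2 V) :=
  {e | ∃ a b, e = s(a, b) ∧ InternalEdge G a b}

/-- The subtree `T_z^{yz}` branches out from the path `P_{u,x}` :
`y` is an interior vertex of the path and `z` is off the path. -/
def BranchesOut (G : SimpleGraph V) (u x y z : V) : Prop :=
  G.Adj y z ∧ OnPath G y u x ∧ y ≠ u ∧ y ≠ x ∧ ¬ OnPath G z u x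

/-- Vertices of the minimal subtree spanning all leaves labeled `ℓ`. -/
def spanVerts (G : SimpleGraph V) (ψ : V → L) (ℓ : L) : Set V :=
  {p | ∃ c d, IsLeaf G c ∧ IsLeaf G d ∧ ψ c = ℓ ∧ ψ d = ℓ ∧ OnPath G p c d}

/-- Degree of `y` within the subtree induced on the vertex set `S`. -/
noncomputable def degIn (G : SimpleGraph V) (S : Set V) (y : V) : ℕ :=
  (G.neighborSet y ∩ S).ncard

/-- One step of deleting a leaf labeled `ℓ` (by pruning, with suppression). -/
def PruneLabelStep (ψ : V → L) (ℓ : L) (G G' : SimpleGraph V) : Prop :=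
  ∃ v₀, IsLeaf G v₀ ∧ ψ v₀ = ℓ ∧ PruneSpec G v₀ G'

/-! ### Auxiliary lemmas for Statement 12 -/

section Aux

variable {G : SimpleGraph V} {ψ : V → L}

lemma mside_not_both {a : L} {u v : V} (h1 : a ∈ Mside G ψ u v)
    (h2 : a ∈ Mside G ψ v u) : False := h1.2 h2.1

lemma resolves_symm {u v : V} {q : Quartet L} (h : Resolves G ψ v u q) :
    Resolves G ψ u v q := by
  obtain ⟨hadj, a, b, c, d, hab, hcd, ha, hb, hc, hd, hq⟩ := h
  exact ⟨hadj.symm, c, d, a, b, hcd, hab, hc, hd, ha, hb, by rw [hq, Sym2.eq_swap]⟩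

lemma no_triangle (hA : G.IsAcyclic) {u v z : V}
    (h1 : G.Adj u v) (h2 : G.Adj v z) (h3 : G.Adj u z) : False := by
  have hp2 : (Walk.cons h1 (Walk.cons h2 Walk.nil)).IsPath := by
    simp [Walk.isPath_def, h1.ne, h3.ne, h2.ne]
  have heq := isAcyclic_iff_path_unique.mp hA (Path.singleton h3) ⟨_, hp2⟩
  have hlen := congrArg (fun p : G.Path u z => p.1.length) heq
  simp [Path.singleton] at hlen

lemma not_reachable_delete (hA : G.IsAcyclic) {u v : V} (h : G.Adj u v) :
    ¬ (G.deleteEdges {s(u, v)}).Reachable u v := by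
  classical
  intro hr
  obtain ⟨W⟩ := hr
  obtain ⟨p, hpath⟩ := W.reverse.toPath
  have hsub : ∀ e ∈ p.edges, e ∈ G.edgeSet := fun e he => by
    have := p.edges_subset_edgeSet he
    rw [edgeSet_deleteEdges] at this
    exact this.1
  have hq : (p.transfer G hsub).IsPath := hpath.transfer hsub
  have hne : s(u, v) ∉ (p.transfer G hsub).edges := by
    rw [Walk.edges_transfer]
    intro hmem
    have := p.edges_subset_edgeSet hmem
    rw [edgeSet_deleteEdges] at this
    exact this.2 rfl
  exact hA _ ((Walk.cons_isCycle_iff _ h).mpr ⟨hq, hne⟩)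

lemma side_disjoint (hA : G.IsAcyclic) {u v z : V} (h : G.Adj u v)
    (h1 : z ∈ side G u v) (h2 : z ∈ side G v u) : False := by
  have hs : G.deleteEdges {s(v, u)} = G.deleteEdges {s(u, v)} := by
    rw [Sym2.eq_swap]
  rw [side, Set.mem_setOf_eq, hs] at h2
  exact not_reachable_delete hA h (h1.symm.trans h2)

lemma side_swap_graph (u v : V) :
    G.deleteEdges {s(v, u)} = G.deleteEdges {s(u, v)} := by rw [Sym2.eq_swap]

lemma walk_side_or {u v : V} {z t : V} (W : G.Walk z t)
    (ht : t ∈ side G u v ∨ t ∈ side G v u) :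
    z ∈ side G u v ∨ z ∈ side G v u := by
  induction W with
  | nil => exact ht
  | @cons a b c hadj W ih =>
    rcases ih ht with h' | h'
    · by_cases he : s(a, b) = s(u, v)
      · rw [Sym2.eq_iff] at he
        rcases he with ⟨rfl, rfl⟩ | ⟨rfl, rfl⟩
        · exact Or.inl (Reachable.refl _)
        · right
          rw [side, Set.mem_setOf_eq, side_swap_graph]
      · have hadj' : (G.deleteEdges {s(u, v)}).Adj a b := by
          rw [deleteEdges_adj]; exact ⟨hadj, by simpa using he⟩
        exact Or.inl ((hadj'.reachable).trans h')
    · by_cases he : s(a, b) = s(u, v)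
      · rw [Sym2.eq_iff] at he
        rcases he with ⟨rfl, rfl⟩ | ⟨rfl, rfl⟩
        · exact Or.inl (Reachable.refl _)
        · right
          rw [side, Set.mem_setOf_eq, side_swap_graph]
      · have hadj' : (G.deleteEdges {s(v, u)}).Adj a b := by
          rw [side_swap_graph, deleteEdges_adj]
          exact ⟨hadj, by simpa using he⟩
        exact Or.inr ((hadj'.reachable).trans h')

lemma mem_side_or {u v : V} {z : V} (W : G.Walk z u) :
    z ∈ side G u v ∨ z ∈ side G v u :=
  walk_side_or W (Or.inl (Reachable.refl _))

lemma mem_side_iff {u v z : V} :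
    z ∈ side G u v ↔ (G.deleteEdges {s(u, v)}).Reachable z u := Iff.rfl

lemma mem_side_swap {u v z : V} :
    z ∈ side G v u ↔ (G.deleteEdges {s(u, v)}).Reachable z v := by
  rw [side, Set.mem_setOf_eq, side_swap_graph]

lemma side_mem_support {u v z : V} (h : z ∈ side G u v) :
    z = u ∨ z ∈ G.support := by
  obtain ⟨W⟩ := h
  cases W with
  | nil => exact Or.inl rfl
  | cons hadj W => exact Or.inr ⟨_, (deleteEdges_adj.mp hadj).1⟩

lemma leaf_mem_support {z : V} (h : IsLeaf G z) : z ∈ G.support := by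
  obtain ⟨a, ha⟩ := Set.ncard_eq_one.mp h
  have : a ∈ G.neighborSet z := ha ▸ Set.mem_singleton a
  exact ⟨a, this⟩

lemma mside_exists_leaf {a : L} {u v : V} (h : a ∈ Mside G ψ u v) :
    ∃ α, IsLeaf G α ∧ α ∈ side G u v ∧ ψ α = a := h.1

lemma mside_all_leaves (hconn : ∀ p ∈ G.support, ∀ r ∈ G.support, G.Reachable p r)
    {a : L} {u v : V} (he : G.Adj u v) (h : a ∈ Mside G ψ u v)
    {β : V} (hβ : IsLeaf G β) (hψ : ψ β = a) : β ∈ side G u v := by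
  obtain ⟨W⟩ := hconn β (leaf_mem_support hβ) u ⟨v, he⟩
  rcases mem_side_or W with h' | h'
  · exact h'
  · exact absurd ⟨β, hβ, h', hψ⟩ h.2

lemma side_conn_aux {u v w x : V} (hw : w ∉ side G u v) (hx : x ∉ side G u v)
    {p t : V} (W : (G.deleteEdges {s(u, v)}).Walk p t) (ht : t ∈ side G u v) :
    (G.deleteEdges {s(w, x)}).Reachable p t := by
  induction W with
  | nil => exact Reachable.refl _
  | @cons a b c hadj W ih =>
    have hbm : b ∈ side G u v := (W.reachable).trans ht
    have ham : a ∈ side G u v := (hadj.reachable).trans hbm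
    have hGadj : G.Adj a b := (deleteEdges_adj.mp hadj).1
    have hne : s(a, b) ≠ s(w, x) := by
      intro hcc
      rcases Sym2.eq_iff.mp hcc with ⟨ha', hb'⟩ | ⟨ha', hb'⟩
      · exact hw (ha' ▸ ham)
      · exact hx (ha' ▸ ham)
    have hadj' : (G.deleteEdges {s(w, x)}).Adj a b := by
      rw [deleteEdges_adj]; exact ⟨hGadj, by simpa using hne⟩
    exact (hadj'.reachable).trans (ih ht)

lemma side_conn {u v w x : V} (hw : w ∉ side G u v) (hx : x ∉ side G u v) :
    ∀ z ∈ side G u v, (G.deleteEdges {s(w, x)}).Reachable z u := by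
  intro z hz
  obtain ⟨W⟩ := hz
  exact side_conn_aux hw hx W (Reachable.refl _)

/-- Key tree-separation lemma: two distinct edges which both separate a vertex `α`
from a vertex `γ` in the same direction are "comparable". -/
lemma two_edges (hA : G.IsAcyclic)
    (hconn : ∀ p ∈ G.support, ∀ r ∈ G.support, G.Reachable p r)
    {u v w x : V} (he : G.Adj u v) (hf : G.Adj w x) (hne : s(w, x) ≠ s(u, v))
    {α γ : V} (hα1 : α ∈ side G u v) (hα2 : α ∈ side G w x)
    (hγ1 : γ ∈ side G v u) (hγ2 : γ ∈ side G x w) :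
    (side G w x ⊆ side G u v) ∨
    (side G u v ⊆ side G w x ∧ side G x w ⊆ side G v u) := by
  have husup : u ∈ G.support := ⟨v, he⟩
  have hwsup : w ∈ G.support := ⟨x, hf⟩
  have hxsup : x ∈ G.support := ⟨w, hf.symm⟩
  obtain ⟨Wwu⟩ := hconn w hwsup u husup
  have hfe : (G.deleteEdges {s(u, v)}).Adj w x := by
    rw [deleteEdges_adj]; exact ⟨hf, by simpa using hne⟩
  rcases mem_side_or (u := u) (v := v) Wwu with hw | hw
  · -- w (and x) on the u-side of e
    have hx : x ∈ side G u v := (hfe.symm.reachable).trans hw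
    have hwn : w ∉ side G v u := fun hc => side_disjoint hA he hw hc
    have hxn : x ∉ side G v u := fun hc => side_disjoint hA he hx hc
    have hcon : ∀ z ∈ side G v u, (G.deleteEdges {s(w, x)}).Reachable z v :=
      side_conn hwn hxn
    have hγx : (G.deleteEdges {s(w, x)}).Reachable γ x := mem_side_swap.mp hγ2
    have hvx : (G.deleteEdges {s(w, x)}).Reachable v x := (hcon γ hγ1).symm.trans hγx
    have hsub : side G v u ⊆ side G x w := fun z hz =>
      mem_side_swap.mpr ((hcon z hz).trans hvx)
    left
    intro z hz
    have hzs : z = w ∨ z ∈ G.support := side_mem_support hz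
    have hreach : G.Reachable z u := by
      rcases hzs with h | hzs
      · exact hconn z (by rw [h]; exact hwsup) u husup
      · exact hconn z hzs u husup
    obtain ⟨W⟩ := hreach
    rcases mem_side_or W with h' | h'
    · exact h'
    · exact absurd (hsub h') (fun hc => side_disjoint hA hf hz hc)
  · -- w (and x) on the v-side of e
    have hw' : (G.deleteEdges {s(u, v)}).Reachable w v := mem_side_swap.mp hw
    have hx : x ∈ side G v u := mem_side_swap.mpr ((hfe.symm.reachable).trans hw')
    have hwn : w ∉ side G u v := fun hc => side_disjoint hA he hc hw
    have hxn : x ∉ side G u v := fun hc => side_disjoint hA he hc hx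
    have hcon : ∀ z ∈ side G u v, (G.deleteEdges {s(w, x)}).Reachable z u :=
      side_conn hwn hxn
    have huw : (G.deleteEdges {s(w, x)}).Reachable u w := (hcon α hα1).symm.trans hα2
    have hsub1 : side G u v ⊆ side G w x := fun z hz => (hcon z hz).trans huw
    refine Or.inr ⟨hsub1, ?_⟩
    intro z hz
    have hzs : z = x ∨ z ∈ G.support := side_mem_support hz
    have hreach : G.Reachable z u := by
      rcases hzs with h | hzs
      · exact hconn z (by rw [h]; exact hxsup) u husup
      · exact hconn z hzs u husup
    obtain ⟨W⟩ := hreach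
    rcases mem_side_or W with h' | h'
    · exact absurd hz (fun hc => side_disjoint hA hf (hsub1 h') hc)
    · exact h'

lemma leaf_side_eq {w x : V} (hleaf : IsLeaf G w) (hadj : G.Adj w x) :
    side G w x = {w} := by
  have hN : G.neighborSet w = {x} := by
    obtain ⟨a, ha⟩ := Set.ncard_eq_one.mp hleaf
    have hx : x ∈ G.neighborSet w := hadj
    rw [ha] at hx ⊢
    rw [Set.mem_singleton_iff] at hx
    rw [hx]
  apply Set.eq_singleton_iff_unique_mem.mpr
  refine ⟨Reachable.refl _, ?_⟩
  intro z hz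
  obtain ⟨W⟩ := (hz : (G.deleteEdges {s(w, x)}).Reachable z w).symm
  cases W with
  | nil => rfl
  | cons hadj' W =>
    exfalso
    have h1 : G.Adj w _ := (deleteEdges_adj.mp hadj').1
    have h2 := (deleteEdges_adj.mp hadj').2
    have : _ ∈ G.neighborSet w := h1
    rw [hN, Set.mem_singleton_iff] at this
    exact h2 (by rw [this]; exact Set.mem_singleton _)

lemma resolves_internal (hA : G.IsAcyclic) {w x : V} {q : Quartet L}
    (hr : Resolves G ψ w x q) : InternalEdge G w x := by
  obtain ⟨hadj, a, b, c, d, hab, hcd, ha, hb, hc, hd, hq⟩ := hr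
  refine ⟨hadj, ?_, ?_⟩
  · intro hleaf
    have hside := leaf_side_eq hleaf hadj
    obtain ⟨α, hαl, hαs, hαψ⟩ := ha.1
    obtain ⟨β, hβl, hβs, hβψ⟩ := hb.1
    rw [hside, Set.mem_singleton_iff] at hαs hβs
    exact hab (by rw [← hαψ, ← hβψ, hαs, hβs])
  · intro hleaf
    have hside := leaf_side_eq hleaf hadj.symm
    obtain ⟨α, hαl, hαs, hαψ⟩ := hc.1
    obtain ⟨β, hβl, hβs, hβψ⟩ := hd.1
    rw [hside, Set.mem_singleton_iff] at hαs hβs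
    exact hcd (by rw [← hαψ, ← hβψ, hαs, hβs])

lemma pair_mem {p q r t : L} {S : Set L} (h : s(p, q) = s(r, t))
    (hr : r ∈ S) (ht : t ∈ S) : p ∈ S ∧ q ∈ S := by
  rcases Sym2.eq_iff.mp h with ⟨h1, h2⟩ | ⟨h1, h2⟩
  · exact ⟨h1 ▸ hr, h2 ▸ ht⟩
  · exact ⟨h1 ▸ ht, h2 ▸ hr⟩

/-- Orientation extraction: if an edge resolves `al|cd` then a suitably oriented
version of the edge has `a,l` on its first side and `c,d` on its second. -/
lemma resolves_orient {w x : V} {a l c d : L}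
    (h : Resolves G ψ w x (s(s(a, l), s(c, d)))) :
    ∃ w' x', G.Adj w' x' ∧ s(w', x') = s(w, x) ∧
      a ∈ Mside G ψ w' x' ∧ l ∈ Mside G ψ w' x' ∧
      c ∈ Mside G ψ x' w' ∧ d ∈ Mside G ψ x' w' := by
  obtain ⟨hadj, a', b', c', d', hab, hcd, ha, hb, hc, hd, hq⟩ := h
  rcases Sym2.eq_iff.mp hq with ⟨h1, h2⟩ | ⟨h1, h2⟩
  · obtain ⟨hal1, hal2⟩ := pair_mem h1 ha hb
    obtain ⟨hcd1, hcd2⟩ := pair_mem h2 hc hd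
    exact ⟨w, x, hadj, rfl, hal1, hal2, hcd1, hcd2⟩
  · obtain ⟨hal1, hal2⟩ := pair_mem h1 hc hd
    obtain ⟨hcd1, hcd2⟩ := pair_mem h2 ha hb
    exact ⟨x, w, hadj.symm, Sym2.eq_swap, hal1, hal2, hcd1, hcd2⟩

/-- The candidate set for `M_u^{uv}` determined by the information content and a
quartet `ab|cd` resolved by `(u,v)`. -/
def Sset (I : Set (Quartet L)) (a b c d : L) : Set L :=
  {a, b} ∪ {ℓ | ℓ ≠ a ∧ s(s(a, ℓ), s(c, d)) ∈ I}

lemma mside_subset_S {u v : V} (he : G.Adj u v) {a b c d : L}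
    (hcd : c ≠ d) (ha : a ∈ Mside G ψ u v)
    (hc : c ∈ Mside G ψ v u) (hd : d ∈ Mside G ψ v u) :
    Mside G ψ u v ⊆ Sset (infoContent G ψ) a b c d := by
  intro ℓ hℓ
  by_cases h1 : ℓ = a
  · exact Or.inl (Or.inl h1)
  · exact Or.inr ⟨h1, u, v, he, a, ℓ, c, d, fun hc' => h1 hc'.symm, hcd,
      ha, hℓ, hc, hd, rfl⟩

lemma S_subset_mside (hA : G.IsAcyclic)
    (hconn : ∀ p ∈ G.support, ∀ r ∈ G.support, G.Reachable p r)
    {u v : V} (he : G.Adj u v) {a b c d : L} (hab : a ≠ b) (hcd : c ≠ d)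
    (ha : a ∈ Mside G ψ u v) (hb : b ∈ Mside G ψ u v)
    (hc : c ∈ Mside G ψ v u) (hd : d ∈ Mside G ψ v u)
    (huniq : ∀ w x, Resolves G ψ w x (s(s(a, b), s(c, d))) → s(w, x) = s(u, v)) :
    Sset (infoContent G ψ) a b c d ⊆ Mside G ψ u v := by
  rintro ℓ (hab' | ⟨hla, p, r, hres⟩)
  · rcases hab' with h | h
    · exact h ▸ ha
    · exact h ▸ hb
  · obtain ⟨w, x, hadjwx, hswx, haw, hlw, hcx, hdx⟩ := resolves_orient hres
    by_cases hef : s(w, x) = s(u, v)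
    · rcases Sym2.eq_iff.mp hef with ⟨h1, h2⟩ | ⟨h1, h2⟩
      · exact h1 ▸ h2 ▸ hlw
      · exact absurd (h1 ▸ h2 ▸ haw) (fun hcc => mside_not_both ha hcc)
    · obtain ⟨α, hαl, hα1, hαψ⟩ := mside_exists_leaf ha
      have hα2 : α ∈ side G w x := mside_all_leaves hconn hadjwx haw hαl hαψ
      obtain ⟨γ, hγl, hγ1, hγψ⟩ := mside_exists_leaf hc
      have hγ2 : γ ∈ side G x w := mside_all_leaves hconn hadjwx.symm hcx hγl hγψ
      rcases two_edges hA hconn he hadjwx hef hα1 hα2 hγ1 hγ2 with hsub | ⟨hs1, hs2⟩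
      · -- side w x ⊆ side u v, hence ℓ ∈ M_u^{uv}
        obtain ⟨lf, hlfl, hlfs, hlfψ⟩ := mside_exists_leaf hlw
        refine ⟨⟨lf, hlfl, hsub hlfs, hlfψ⟩, ?_⟩
        rintro ⟨μ, hμl, hμs, hμψ⟩
        have : μ ∈ side G w x := mside_all_leaves hconn hadjwx hlw hμl hμψ
        exact side_disjoint hA he (hsub this) hμs
      · -- (u,v)-sides nested in (w,x)-sides: (w,x) also resolves ab|cd, contradiction
        exfalso
        apply hef
        apply huniq w x
        refine ⟨hadjwx, a, b, c, d, hab, hcd, haw, ?_, hcx, hdx, rfl⟩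
        obtain ⟨β, hβl, hβs, hβψ⟩ := mside_exists_leaf hb
        refine ⟨⟨β, hβl, hs1 hβs, hβψ⟩, ?_⟩
        rintro ⟨μ, hμl, hμs, hμψ⟩
        have : μ ∈ side G u v := mside_all_leaves hconn he hb hμl hμψ
        exact side_disjoint hA he this (hs2 hμs)

/-- Characterization of `M_u^{uv}` from the information content, given a
distinguishing quartet. -/
lemma mside_eq_S (hA : G.IsAcyclic)
    (hconn : ∀ p ∈ G.support, ∀ r ∈ G.support, G.Reachable p r)
    {u v : V} (he : G.Adj u v) {a b c d : L} (hab : a ≠ b) (hcd : c ≠ d)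
    (ha : a ∈ Mside G ψ u v) (hb : b ∈ Mside G ψ u v)
    (hc : c ∈ Mside G ψ v u) (hd : d ∈ Mside G ψ v u)
    (huniq : ∀ w x, Resolves G ψ w x (s(s(a, b), s(c, d))) → s(w, x) = s(u, v)) :
    Mside G ψ u v = Sset (infoContent G ψ) a b c d :=
  Set.Subset.antisymm (mside_subset_S he hcd ha hc hd)
    (S_subset_mside hA hconn he hab hcd ha hb hc hd huniq)

end Aux

section Contract

open scoped Classical

variable [Finite V] {G : SimpleGraph V} {ψ : V → L}

/-- The vertex renaming accompanying contraction of `(u,v)` : send `v` to `u`. -/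
noncomputable def rho (u v z : V) : V := if z = v then u else z

lemma rho_v {u v : V} : rho u v v = u := by simp [rho]

lemma rho_of_ne {u v z : V} (h : z ≠ v) : rho u v z = z := by simp [rho, h]

lemma rho_ne_v {u v z : V} (huv : u ≠ v) : rho u v z ≠ v := by
  unfold rho; split
  · exact huv
  · assumption

lemma contract_adj {u v p q : V} :
    (contractEdge G u v).Adj p q ↔ p ≠ q ∧ p ≠ v ∧ q ≠ v ∧
      (G.Adj p q ∨ (p = u ∧ G.Adj v q) ∨ (q = u ∧ G.Adj p v)) := Iff.rfl

lemma not_adj_both (hA : G.IsAcyclic) {u v z : V} (he : G.Adj u v)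
    (h1 : G.Adj z u) (h2 : G.Adj z v) : False :=
  no_triangle hA he h2.symm h1.symm

lemma contract_nbhd_of_not_adj (hA : G.IsAcyclic) {u v z : V} (he : G.Adj u v)
    (hzu : z ≠ u) (hzv : z ≠ v) (h : ¬ G.Adj z v) :
    (contractEdge G u v).neighborSet z = G.neighborSet z := by
  ext y
  simp only [mem_neighborSet, contract_adj]
  constructor
  · rintro ⟨h1, h2, h3, hGa | ⟨rfl, hva⟩ | ⟨rfl, hzv'⟩⟩
    · exact hGa
    · exact absurd rfl hzu
    · exact absurd hzv' h
  · intro hGa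
    exact ⟨hGa.ne, hzv, fun hyv => h (hyv ▸ hGa), Or.inl hGa⟩

lemma contract_nbhd_of_adj (hA : G.IsAcyclic) {u v z : V} (he : G.Adj u v)
    (hzu : z ≠ u) (hzv : z ≠ v) (h : G.Adj z v) :
    (contractEdge G u v).neighborSet z = insert u (G.neighborSet z \ {v}) := by
  ext y
  simp only [mem_neighborSet, contract_adj, Set.mem_insert_iff, Set.mem_diff,
    Set.mem_singleton_iff]
  constructor
  · rintro ⟨h1, h2, h3, hGa | ⟨rfl, hva⟩ | ⟨rfl, hzv'⟩⟩
    · exact Or.inr ⟨hGa, h3⟩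
    · exact absurd rfl hzu
    · exact Or.inl rfl
  · rintro (rfl | ⟨hGa, hyv⟩)
    · exact ⟨fun hc => hzu hc, hzv, he.ne, Or.inr (Or.inr ⟨rfl, h⟩)⟩
    · exact ⟨hGa.ne, hzv, hyv, Or.inl hGa⟩

lemma contract_nbhd_v {u v : V} : (contractEdge G u v).neighborSet v = ∅ := by
  ext y
  simp only [mem_neighborSet, contract_adj, Set.mem_empty_iff_false, iff_false]
  rintro ⟨h1, h2, h3, h4⟩
  exact h2 rfl

lemma contract_nbhd_u (hA : G.IsAcyclic) {u v : V} (he : G.Adj u v) :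
    G.neighborSet v \ {u} ⊆ (contractEdge G u v).neighborSet u := by
  intro y hy
  obtain ⟨hyv, hyu⟩ := hy
  rw [Set.mem_singleton_iff] at hyu
  exact ⟨fun hc => hyu hc.symm, he.ne, (hyv : G.Adj v y).ne',
    Or.inr (Or.inl ⟨rfl, hyv⟩)⟩

lemma contract_leaf_iff (hA : G.IsAcyclic) {u v : V} (he : G.Adj u v)
    (hdu : 3 ≤ deg G u) (hdv : 3 ≤ deg G v) (z : V) :
    IsLeaf (contractEdge G u v) z ↔ IsLeaf G z := by
  by_cases hzu : z = u
  · subst hzu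
    have h1 : ¬ IsLeaf G z := by unfold IsLeaf deg at *; omega
    have h2 : ¬ IsLeaf (contractEdge G z v) z := by
      intro hc
      have hsub := contract_nbhd_u hA he
      have hcard : (G.neighborSet v \ {z}).ncard ≤ 1 := by
        rw [← hc]
        exact Set.ncard_le_ncard hsub (Set.toFinite _)
      have hmem : z ∈ G.neighborSet v := he.symm
      rw [Set.ncard_diff_singleton_of_mem hmem] at hcard
      unfold deg at hdv
      omega
    exact iff_of_false h2 h1
  · by_cases hzv : z = v
    · subst hzv
      have h1 : ¬ IsLeaf G z := by unfold IsLeaf deg at *; omega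
      have h2 : ¬ IsLeaf (contractEdge G u z) z := by
        unfold IsLeaf deg
        rw [contract_nbhd_v]
        simp
      exact iff_of_false h2 h1
    · by_cases hadj : G.Adj z v
      · unfold IsLeaf deg
        rw [contract_nbhd_of_adj hA he hzu hzv hadj]
        have hv : v ∈ G.neighborSet z := hadj
        have hu : u ∉ G.neighborSet z \ {v} := by
          rintro ⟨hu', _⟩
          exact not_adj_both hA he hu' hadj
        rw [Set.ncard_insert_of_notMem hu (Set.toFinite _),
          Set.ncard_diff_singleton_of_mem hv]
        have : 0 < (G.neighborSet z).ncard :=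
          (Set.ncard_pos (Set.toFinite _)).mpr ⟨v, hv⟩
        omega
      · unfold IsLeaf deg
        rw [contract_nbhd_of_not_adj hA he hzu hzv hadj]

lemma rho_eq_cases {u v a b : V} (h : rho u v a = rho u v b) :
    a = b ∨ (a = u ∧ b = v) ∨ (a = v ∧ b = u) := by
  unfold rho at h
  split at h <;> split at h <;> simp_all

lemma rho_edge_inj (hA : G.IsAcyclic) {u v : V} (he : G.Adj u v) {p y w x : V}
    (hpy : G.Adj p y) (hwx : G.Adj w x)
    (hpe : s(p, y) ≠ s(u, v)) (hwe : s(w, x) ≠ s(u, v))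
    (h : s(rho u v p, rho u v y) = s(rho u v w, rho u v x)) : s(p, y) = s(w, x) := by
  rcases Sym2.eq_iff.mp h with ⟨h1, h2⟩ | ⟨h1, h2⟩ <;>
  rcases rho_eq_cases h1 with h3 | ⟨h3, h4⟩ | ⟨h3, h4⟩ <;>
  rcases rho_eq_cases h2 with h5 | ⟨h5, h6⟩ | ⟨h5, h6⟩ <;>
  subst_vars <;>
  first
    | rfl
    | exact Sym2.eq_swap
    | exact absurd rfl hpy.ne
    | exact absurd rfl hwx.ne
    | exact absurd rfl hpe
    | exact absurd Sym2.eq_swap hpe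
    | exact absurd rfl hwe
    | exact absurd Sym2.eq_swap hwe
    | exact (not_adj_both hA he hpy hwx).elim
    | exact (not_adj_both hA he hwx hpy).elim
    | exact (not_adj_both hA he hpy.symm hwx.symm).elim
    | exact (not_adj_both hA he hwx.symm hpy.symm).elim
    | exact (not_adj_both hA he hpy hwx.symm).elim
    | exact (not_adj_both hA he hpy.symm hwx).elim
    | exact (not_adj_both hA he hwx hpy.symm).elim
    | exact (not_adj_both hA he hwx.symm hpy).elim

lemma contract_adj_of {u v a b : V} (he : G.Adj u v) (hGab : G.Adj a b)
    (hab : s(a, b) ≠ s(u, v)) :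
    (contractEdge G u v).Adj (rho u v a) (rho u v b) := by
  have hne : rho u v a ≠ rho u v b := by
    intro hc
    rcases rho_eq_cases hc with h | ⟨h1, h2⟩ | ⟨h1, h2⟩
    · exact hGab.ne h
    · exact hab (by rw [h1, h2])
    · exact hab (by rw [h1, h2]; exact Sym2.eq_swap)
  refine ⟨hne, rho_ne_v he.ne, rho_ne_v he.ne, ?_⟩
  by_cases hav : a = v
  · have hGvb : G.Adj v b := by rw [← hav]; exact hGab
    have hbv : b ≠ v := hGvb.ne'
    rw [hav, rho_v, rho_of_ne hbv]
    exact Or.inr (Or.inl ⟨rfl, hGvb⟩)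
  · by_cases hbv : b = v
    · have hGav : G.Adj a v := by rw [← hbv]; exact hGab
      rw [hbv, rho_v, rho_of_ne hav]
      exact Or.inr (Or.inr ⟨rfl, hGav⟩)
    · rw [rho_of_ne hav, rho_of_ne hbv]
      exact Or.inl hGab

lemma contract_walk_T1 (hA : G.IsAcyclic) {u v : V} (he : G.Adj u v)
    {w x : V} (hwx : G.Adj w x) (hfe : s(w, x) ≠ s(u, v)) {p q : V}
    (W : (G.deleteEdges {s(w, x)}).Walk p q) :
    ((contractEdge G u v).deleteEdges {s(rho u v w, rho u v x)}).Reachable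
      (rho u v p) (rho u v q) := by
  induction W with
  | nil => exact Reachable.refl _
  | @cons a b c hadj W ih =>
    have hGab : G.Adj a b := (deleteEdges_adj.mp hadj).1
    have habf : s(a, b) ≠ s(w, x) := by
      have := (deleteEdges_adj.mp hadj).2
      simpa using this
    by_cases hab : s(a, b) = s(u, v)
    · have hr : rho u v a = rho u v b := by
        rcases Sym2.eq_iff.mp hab with ⟨h1, h2⟩ | ⟨h1, h2⟩ <;>
          rw [h1, h2] <;> simp [rho_v, rho_of_ne he.ne, rho, he.ne]
      rw [hr]
      exact ih
    · have hadj' : ((contractEdge G u v).deleteEdges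
          {s(rho u v w, rho u v x)}).Adj (rho u v a) (rho u v b) := by
        rw [deleteEdges_adj]
        refine ⟨contract_adj_of he hGab hab, ?_⟩
        simp only [Set.mem_singleton_iff]
        intro hcc
        exact habf (rho_edge_inj hA he hGab hwx hab hfe hcc)
      exact (hadj'.reachable).trans ih

lemma contract_walk_T2 (hA : G.IsAcyclic) {u v : V} (he : G.Adj u v)
    {w x : V} (hwx : G.Adj w x) (hfe : s(w, x) ≠ s(u, v)) {p q : V}
    (W : ((contractEdge G u v).deleteEdges {s(rho u v w, rho u v x)}).Walk p q) :
    (G.deleteEdges {s(w, x)}).Reachable p q := by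
  induction W with
  | nil => exact Reachable.refl _
  | @cons a b c hadj W ih =>
    have hH : (contractEdge G u v).Adj a b := (deleteEdges_adj.mp hadj).1
    have habf : s(a, b) ≠ s(rho u v w, rho u v x) := by
      have := (deleteEdges_adj.mp hadj).2
      simpa using this
    obtain ⟨hne, hav, hbv, hcase⟩ := hH
    have hstep : (G.deleteEdges {s(w, x)}).Reachable a b := by
      rcases hcase with hGab | ⟨hau, hvb⟩ | ⟨hbu, hav'⟩
      · have hnf : s(a, b) ≠ s(w, x) := by
          intro hcc
          apply habf
          rw [← rho_of_ne hav, ← rho_of_ne hbv]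
          rcases Sym2.eq_iff.mp hcc with ⟨h1, h2⟩ | ⟨h1, h2⟩ <;> rw [h1, h2]
          exact Sym2.eq_swap
        have hadj2 : (G.deleteEdges {s(w, x)}).Adj a b := by
          rw [deleteEdges_adj]; exact ⟨hGab, by simpa using hnf⟩
        exact hadj2.reachable
      · -- a = u, G.Adj v b
        have h1 : (G.deleteEdges {s(w, x)}).Adj a v := by
          rw [deleteEdges_adj, hau]
          refine ⟨he, ?_⟩
          simp only [Set.mem_singleton_iff]
          exact fun hcc => hfe hcc.symm
        have h2 : (G.deleteEdges {s(w, x)}).Adj v b := by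
          rw [deleteEdges_adj]
          refine ⟨hvb, ?_⟩
          simp only [Set.mem_singleton_iff]
          intro hcc
          apply habf
          have hkey : s(rho u v v, rho u v b) = s(rho u v w, rho u v x) := by
            rcases Sym2.eq_iff.mp hcc with ⟨h1', h2'⟩ | ⟨h1', h2'⟩ <;> rw [h1', h2']
            exact Sym2.eq_swap
          rw [rho_v, rho_of_ne hbv] at hkey
          rw [hau]
          exact hkey
        exact (h1.reachable).trans h2.reachable
      · -- b = u, G.Adj a v
        have h1 : (G.deleteEdges {s(w, x)}).Adj a v := by
          rw [deleteEdges_adj]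
          refine ⟨hav', ?_⟩
          simp only [Set.mem_singleton_iff]
          intro hcc
          apply habf
          have hkey : s(rho u v a, rho u v v) = s(rho u v w, rho u v x) := by
            rcases Sym2.eq_iff.mp hcc with ⟨h1', h2'⟩ | ⟨h1', h2'⟩ <;> rw [h1', h2']
            exact Sym2.eq_swap
          rw [rho_v, rho_of_ne hav] at hkey
          rw [hbu]
          exact hkey
        have h2 : (G.deleteEdges {s(w, x)}).Adj v b := by
          rw [deleteEdges_adj, hbu]
          refine ⟨he.symm, ?_⟩
          simp only [Set.mem_singleton_iff]
          intro hcc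
          exact hfe (hcc.symm.trans Sym2.eq_swap)
        exact (h1.reachable).trans h2.reachable
    exact hstep.trans ih

lemma contract_side_iff (hA : G.IsAcyclic) {u v : V} (he : G.Adj u v)
    {w x : V} (hwx : G.Adj w x) (hfe : s(w, x) ≠ s(u, v)) {z : V} (hzv : z ≠ v) :
    z ∈ side G w x ↔ z ∈ side (contractEdge G u v) (rho u v w) (rho u v x) := by
  constructor
  · intro hz
    obtain ⟨W⟩ := (hz : (G.deleteEdges {s(w, x)}).Reachable z w)
    have := contract_walk_T1 hA he hwx hfe W
    rwa [rho_of_ne hzv] at this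
  · intro hz
    obtain ⟨W⟩ := (hz : ((contractEdge G u v).deleteEdges
      {s(rho u v w, rho u v x)}).Reachable z (rho u v w))
    have h1 := contract_walk_T2 hA he hwx hfe W
    by_cases hwv : w = v
    · have h2 : (G.deleteEdges {s(w, x)}).Adj u w := by
        rw [deleteEdges_adj, hwv]
        refine ⟨he, ?_⟩
        simp only [Set.mem_singleton_iff]
        intro hcc
        exact hfe (by rw [hwv, ← hcc])
      have : rho u v w = u := by rw [hwv, rho_v]
      rw [this] at h1
      exact h1.trans h2.reachable
    · rwa [rho_of_ne hwv] at h1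

lemma contract_sideLabels (hA : G.IsAcyclic) {u v : V} (he : G.Adj u v)
    (hdu : 3 ≤ deg G u) (hdv : 3 ≤ deg G v)
    {w x : V} (hwx : G.Adj w x) (hfe : s(w, x) ≠ s(u, v)) :
    sideLabels G ψ w x = sideLabels (contractEdge G u v) ψ (rho u v w) (rho u v x) := by
  ext m
  constructor
  · rintro ⟨z, hzl, hzs, hzψ⟩
    have hzv : z ≠ v := by
      intro hc
      rw [hc] at hzl
      unfold IsLeaf deg at hzl
      unfold deg at hdv
      omega
    exact ⟨z, (contract_leaf_iff hA he hdu hdv z).mpr hzl,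
      (contract_side_iff hA he hwx hfe hzv).mp hzs, hzψ⟩
  · rintro ⟨z, hzl, hzs, hzψ⟩
    have hzl' : IsLeaf G z := (contract_leaf_iff hA he hdu hdv z).mp hzl
    have hzv : z ≠ v := by
      intro hc
      rw [hc] at hzl'
      unfold IsLeaf deg at hzl'
      unfold deg at hdv
      omega
    exact ⟨z, hzl', (contract_side_iff hA he hwx hfe hzv).mpr hzs, hzψ⟩

lemma contract_mside (hA : G.IsAcyclic) {u v : V} (he : G.Adj u v)
    (hdu : 3 ≤ deg G u) (hdv : 3 ≤ deg G v)
    {w x : V} (hwx : G.Adj w x) (hfe : s(w, x) ≠ s(u, v)) :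
    Mside G ψ w x = Mside (contractEdge G u v) ψ (rho u v w) (rho u v x) := by
  have hfe' : s(x, w) ≠ s(u, v) := fun hc => hfe (Sym2.eq_swap.trans hc)
  unfold Mside
  rw [← contract_sideLabels hA he hdu hdv hwx hfe,
    ← contract_sideLabels (ψ := ψ) hA he hdu hdv hwx.symm hfe']

lemma contract_resolves_iff (hA : G.IsAcyclic) {u v : V} (he : G.Adj u v)
    (hdu : 3 ≤ deg G u) (hdv : 3 ≤ deg G v)
    {w x : V} (hwx : G.Adj w x) (hfe : s(w, x) ≠ s(u, v)) {q : Quartet L} :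
    Resolves G ψ w x q ↔
      Resolves (contractEdge G u v) ψ (rho u v w) (rho u v x) q := by
  have hm1 := contract_mside (ψ := ψ) hA he hdu hdv hwx hfe
  have hm2 := contract_mside (ψ := ψ) hA he hdu hdv hwx.symm
    (fun hc => hfe (Sym2.eq_swap.trans hc))
  constructor
  · rintro ⟨hadj, a, b, c, d, hab, hcd, ha, hb, hc, hd, hq⟩
    exact ⟨contract_adj_of he hwx hfe, a, b, c, d, hab, hcd,
      hm1 ▸ ha, hm1 ▸ hb, hm2 ▸ hc, hm2 ▸ hd, hq⟩
  · rintro ⟨hadj, a, b, c, d, hab, hcd, ha, hb, hc, hd, hq⟩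
    exact ⟨hwx, a, b, c, d, hab, hcd,
      hm1.symm ▸ ha, hm1.symm ▸ hb, hm2.symm ▸ hc, hm2.symm ▸ hd, hq⟩

lemma contract_adj_lift {u v p r : V} (he : G.Adj u v)
    (h : (contractEdge G u v).Adj p r) :
    ∃ w x, G.Adj w x ∧ s(w, x) ≠ s(u, v) ∧ rho u v w = p ∧ rho u v x = r := by
  obtain ⟨hne, hpv, hrv, hcase⟩ := h
  rcases hcase with hGpr | ⟨hpu, hvr⟩ | ⟨hru, hpv'⟩
  · refine ⟨p, r, hGpr, ?_, rho_of_ne hpv, rho_of_ne hrv⟩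
    intro hc
    rcases Sym2.eq_iff.mp hc with ⟨h1, h2⟩ | ⟨h1, h2⟩
    · exact hrv h2
    · exact hpv h1
  · refine ⟨v, r, hvr, ?_, by rw [rho_v, hpu], rho_of_ne hrv⟩
    intro hc
    rcases Sym2.eq_iff.mp hc with ⟨h1, h2⟩ | ⟨h1, h2⟩
    · exact he.ne h1.symm
    · exact hne (by rw [hpu, h2])
  · refine ⟨p, v, hpv', ?_, rho_of_ne hpv, by rw [rho_v, hru]⟩
    intro hc
    rcases Sym2.eq_iff.mp hc with ⟨h1, h2⟩ | ⟨h1, h2⟩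
    · exact hne (by rw [hru, h1])
    · exact he.ne h2.symm

/-- The information content after contracting an internal edge consists of the
quartets resolved by the other edges. -/
lemma contract_infoContent (hA : G.IsAcyclic) {u v : V} (he : G.Adj u v)
    (hdu : 3 ≤ deg G u) (hdv : 3 ≤ deg G v) :
    infoContent (contractEdge G u v) ψ =
      {q | ∃ w x, Resolves G ψ w x q ∧ s(w, x) ≠ s(u, v)} := by
  ext q
  constructor
  · rintro ⟨p, r, hres⟩
    obtain ⟨w, x, hwx, hfe, hw, hx⟩ := contract_adj_lift he hres.1
    refine ⟨w, x, ?_, hfe⟩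
    rw [contract_resolves_iff (ψ := ψ) hA he hdu hdv hwx hfe, hw, hx]
    exact hres
  · rintro ⟨w, x, hres, hfe⟩
    exact ⟨_, _, (contract_resolves_iff hA he hdu hdv hres.1 hfe).mp hres⟩

/-- In a maximally reduced tree, every internal edge resolves a quartet that no
other edge resolves. -/
lemma exists_distinguishing (hA : G.IsAcyclic)
    (hint3 : ∀ z ∈ G.support, ¬ IsLeaf G z → 3 ≤ deg G z)
    (hmax : ∀ a b, ¬ Contractible G ψ a b) {u v : V} (hInt : InternalEdge G u v) :
    ∃ q, Resolves G ψ u v q ∧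
      ∀ w x, Resolves G ψ w x q → s(w, x) = s(u, v) := by
  have hdu : 3 ≤ deg G u := hint3 u ⟨v, hInt.1⟩ hInt.2.1
  have hdv : 3 ≤ deg G v := hint3 v ⟨u, hInt.1.symm⟩ hInt.2.2
  have hne : infoContent (contractEdge G u v) ψ ≠ infoContent G ψ :=
    fun hc => hmax u v ⟨hInt, hc⟩
  rw [contract_infoContent hA hInt.1 hdu hdv] at hne
  by_contra hcon
  push_neg at hcon
  apply hne
  ext q
  constructor
  · rintro ⟨w, x, hres, _⟩
    exact ⟨w, x, hres⟩
  · rintro ⟨w, x, hres⟩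
    by_cases hc : s(w, x) = s(u, v)
    · have hres' : Resolves G ψ u v q := by
        rcases Sym2.eq_iff.mp hc with ⟨h1, h2⟩ | ⟨h1, h2⟩
        · rw [h1, h2] at hres; exact hres
        · rw [h1, h2] at hres; exact resolves_symm hres
      obtain ⟨w', x', hres'', hne''⟩ := hcon q hres'
      exact ⟨w', x', hres'', hne''⟩
    · exact ⟨w, x, hres, hc⟩

end Contract

section Main

lemma delta_eq_of_msides {G : SimpleGraph V} {ψ : V → L} {G' : SimpleGraph V'}
    {ψ' : V' → L} {u v : V} {u' v' : V'}
    (hadj : G.Adj u v) (hadj' : G'.Adj u' v')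
    (h1 : Mside G ψ u v = Mside G' ψ' u' v')
    (h2 : Mside G ψ v u = Mside G' ψ' v' u') :
    Δ G ψ u v = Δ G' ψ' u' v' := by
  ext q
  constructor
  · rintro ⟨_, a, b, c, d, hab, hcd, ha, hb, hc, hd, hq⟩
    exact ⟨hadj', a, b, c, d, hab, hcd, h1 ▸ ha, h1 ▸ hb, h2 ▸ hc, h2 ▸ hd, hq⟩
  · rintro ⟨_, a, b, c, d, hab, hcd, ha, hb, hc, hd, hq⟩
    exact ⟨hadj, a, b, c, d, hab, hcd, h1.symm ▸ ha, h1.symm ▸ hb,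
      h2.symm ▸ hc, h2.symm ▸ hd, hq⟩

/-- Key matching lemma: every internal edge of `T` has a counterpart in `T'`
with the same `M`-sets. -/
lemma key_match (T : MulTree V L) (T' : MulTree V' L)
    (hT : MaximallyReduced T.G T.ψ) (hT' : MaximallyReduced T'.G T'.ψ)
    (hinfo : infoContent T.G T.ψ = infoContent T'.G T'.ψ)
    {u v : V} (h : InternalEdge T.G u v) :
    ∃ u' v', InternalEdge T'.G u' v' ∧
      Mside T.G T.ψ u v = Mside T'.G T'.ψ u' v' ∧
      Mside T.G T.ψ v u = Mside T'.G T'.ψ v' u' := by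
  haveI := T.fin
  haveI := T'.fin
  obtain ⟨q, hres, huniq⟩ := exists_distinguishing T.acyclic T.internal3 hT.2 h
  obtain ⟨hadj, a, b, c, d, hab, hcd, ha, hb, hc, hd, hq⟩ := hres
  subst hq
  have hqI : s(s(a, b), s(c, d)) ∈ infoContent T'.G T'.ψ := by
    rw [← hinfo]
    exact ⟨u, v, hadj, a, b, c, d, hab, hcd, ha, hb, hc, hd, rfl⟩
  obtain ⟨p, r, hres'⟩ := hqI
  obtain ⟨u', v', hadj', hs', ha', hb', hc', hd'⟩ := resolves_orient hres'
  have hres'2 : Resolves T'.G T'.ψ u' v' (s(s(a, b), s(c, d))) :=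
    ⟨hadj', a, b, c, d, hab, hcd, ha', hb', hc', hd', rfl⟩
  have hint' : InternalEdge T'.G u' v' := resolves_internal T'.acyclic hres'2
  -- uniqueness hypothesis transported to the (v,u) orientation
  have huniq' : ∀ w x, Resolves T.G T.ψ w x (s(s(c, d), s(a, b))) →
      s(w, x) = s(v, u) := by
    intro w x hr
    have hqq : (s(s(c, d), s(a, b)) : Quartet L) = s(s(a, b), s(c, d)) :=
      Sym2.eq_swap
    rw [hqq] at hr
    rw [huniq w x hr]
    exact Sym2.eq_swap
  have hMS1 : Mside T.G T.ψ u v = Sset (infoContent T.G T.ψ) a b c d :=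
    mside_eq_S T.acyclic T.conn hadj hab hcd ha hb hc hd huniq
  have hMS2 : Mside T.G T.ψ v u = Sset (infoContent T.G T.ψ) c d a b :=
    mside_eq_S T.acyclic T.conn hadj.symm hcd hab hc hd ha hb huniq'
  have hsub1 : Mside T'.G T'.ψ u' v' ⊆ Mside T.G T.ψ u v := by
    intro ℓ hℓ
    rw [hMS1, hinfo]
    exact mside_subset_S hadj' hcd ha' hc' hd' hℓ
  have hsub2 : Mside T'.G T'.ψ v' u' ⊆ Mside T.G T.ψ v u := by
    intro ℓ hℓ
    rw [hMS2, hinfo]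
    exact mside_subset_S hadj'.symm hab hc' ha' hb' hℓ
  -- now use a distinguishing quartet for (u',v') in T'
  obtain ⟨q2, hres2, huniq2⟩ :=
    exists_distinguishing T'.acyclic T'.internal3 hT'.2 hint'
  obtain ⟨_, a2, b2, c2, d2, hab2, hcd2, ha2, hb2, hc2, hd2, hq2⟩ := hres2
  subst hq2
  have huniq2' : ∀ w x, Resolves T'.G T'.ψ w x (s(s(c2, d2), s(a2, b2))) →
      s(w, x) = s(v', u') := by
    intro w x hr
    have hqq : (s(s(c2, d2), s(a2, b2)) : Quartet L) = s(s(a2, b2), s(c2, d2)) :=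
      Sym2.eq_swap
    rw [hqq] at hr
    rw [huniq2 w x hr]
    exact Sym2.eq_swap
  have hMS1' : Mside T'.G T'.ψ u' v' =
      Sset (infoContent T'.G T'.ψ) a2 b2 c2 d2 :=
    mside_eq_S T'.acyclic T'.conn hadj' hab2 hcd2 ha2 hb2 hc2 hd2 huniq2
  have hMS2' : Mside T'.G T'.ψ v' u' =
      Sset (infoContent T'.G T'.ψ) c2 d2 a2 b2 :=
    mside_eq_S T'.acyclic T'.conn hadj'.symm hcd2 hab2 hc2 hd2 ha2 hb2 huniq2'
  have hsub1' : Mside T.G T.ψ u v ⊆ Mside T'.G T'.ψ u' v' := by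
    intro ℓ hℓ
    rw [hMS1', ← hinfo]
    exact mside_subset_S hadj hcd2 (hsub1 ha2) (hsub2 hc2) (hsub2 hd2) hℓ
  have hsub2' : Mside T.G T.ψ v u ⊆ Mside T'.G T'.ψ v' u' := by
    intro ℓ hℓ
    rw [hMS2', ← hinfo]
    exact mside_subset_S hadj.symm hab2 (hsub2 hc2) (hsub1 ha2) (hsub1 hb2) hℓ
  exact ⟨u', v', hint', Set.Subset.antisymm hsub1' hsub1,
    Set.Subset.antisymm hsub2' hsub2⟩

/-- Uniqueness: in a maximally reduced tree, an internal edge is determined by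
its pair of `M`-sets. -/
lemma mside_unique (T : MulTree V L) (hT : MaximallyReduced T.G T.ψ)
    {p r s t : V} (h1 : InternalEdge T.G p r) (h2 : InternalEdge T.G s t)
    (hm1 : Mside T.G T.ψ p r = Mside T.G T.ψ s t)
    (hm2 : Mside T.G T.ψ r p = Mside T.G T.ψ t s) :
    s(p, r) = s(s, t) := by
  haveI := T.fin
  obtain ⟨q, hres, huniq⟩ := exists_distinguishing T.acyclic T.internal3 hT.2 h1
  obtain ⟨_, a, b, c, d, hab, hcd, ha, hb, hc, hd, hq⟩ := hres
  have hres2 : Resolves T.G T.ψ s t q :=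
    ⟨h2.1, a, b, c, d, hab, hcd, hm1 ▸ ha, hm1 ▸ hb, hm2 ▸ hc, hm2 ▸ hd, hq⟩
  exact (huniq s t hres2).symm

end Main

/-- For maximally reduced MUL-trees `T, T'` with `I(T) = I(T')`,
there is a bijection `φ` between the internal edges of `T` and of `T'` such that
corresponding edges, suitably oriented, have equal `M`-sets on corresponding
sides; in particular `Δ(u,v) = Δ(φ(u,v))`. -/
theorem stmt12 (T : MulTree V L) (T' : MulTree V' L)
    (hT : MaximallyReduced T.G T.ψ) (hT' : MaximallyReduced T'.G T'.ψ)
    (hinfo : infoContent T.G T.ψ = infoContent T'.G T'.ψ) :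
    ∃ φ : internalEdgeSet T.G ≃ internalEdgeSet T'.G,
      ∀ (u v : V) (h : InternalEdge T.G u v),
        ∃ u' v' : V', InternalEdge T'.G u' v' ∧
          (φ ⟨s(u, v), ⟨u, v, rfl, h⟩⟩).1 = s(u', v') ∧
          Mside T.G T.ψ u v = Mside T'.G T'.ψ u' v' ∧
          Mside T.G T.ψ v u = Mside T'.G T'.ψ v' u' ∧
          Δ T.G T.ψ u v = Δ T'.G T'.ψ u' v' := by
  classical
  haveI := T.fin
  haveI := T'.fin
  -- the matching relation between internal edges
  let R : Sym2 V → Sym2 V' → Prop := fun e e' =>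
    ∃ u v u' v', e = s(u, v) ∧ e' = s(u', v') ∧
      InternalEdge T.G u v ∧ InternalEdge T'.G u' v' ∧
      Mside T.G T.ψ u v = Mside T'.G T'.ψ u' v' ∧
      Mside T.G T.ψ v u = Mside T'.G T'.ψ v' u'
  have hEX : ∀ e ∈ internalEdgeSet T.G,
      ∃ e' ∈ internalEdgeSet T'.G, R e e' := by
    rintro e ⟨a0, b0, rfl, hint⟩
    obtain ⟨u', v', hint', hm1, hm2⟩ := key_match T T' hT hT' hinfo hint
    exact ⟨s(u', v'), ⟨u', v', rfl, hint'⟩,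
      a0, b0, u', v', rfl, rfl, hint, hint', hm1, hm2⟩
  have hEX' : ∀ e' ∈ internalEdgeSet T'.G,
      ∃ e ∈ internalEdgeSet T.G, R e e' := by
    rintro e' ⟨a0, b0, rfl, hint'⟩
    obtain ⟨u, v, hint, hm1, hm2⟩ := key_match T' T hT' hT hinfo.symm hint'
    exact ⟨s(u, v), ⟨u, v, rfl, hint⟩,
      u, v, a0, b0, rfl, rfl, hint, hint', hm1.symm, hm2.symm⟩
  have hUN : ∀ e e₁' e₂', R e e₁' → R e e₂' → e₁' = e₂' := by
    rintro e e1 e2 ⟨u1, v1, u1', v1', he1, rfl, hi1, hi1', hm1, hm2⟩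
      ⟨u2, v2, u2', v2', he2, rfl, hi2, hi2', hm3, hm4⟩
    have hee := he1.symm.trans he2
    rcases Sym2.eq_iff.mp hee with ⟨h1, h2⟩ | ⟨h1, h2⟩
    · exact mside_unique T' hT' hi1' hi2'
        (by rw [← hm1, ← hm3, h1, h2]) (by rw [← hm2, ← hm4, h1, h2])
    · have := mside_unique T' hT' hi1'
        ⟨hi2'.1.symm, hi2'.2.2, hi2'.2.1⟩
        (by rw [← hm1, ← hm4, h1, h2]) (by rw [← hm2, ← hm3, h1, h2])
      exact this.trans Sym2.eq_swap
  have hUN' : ∀ e' e₁ e₂, R e₁ e' → R e₂ e' → e₁ = e₂ := by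
    rintro e' e1 e2 ⟨u1, v1, u1', v1', rfl, he1, hi1, hi1', hm1, hm2⟩
      ⟨u2, v2, u2', v2', rfl, he2, hi2, hi2', hm3, hm4⟩
    have hee := he1.symm.trans he2
    rcases Sym2.eq_iff.mp hee with ⟨h1, h2⟩ | ⟨h1, h2⟩
    · exact mside_unique T hT hi1 hi2
        (by rw [hm1, hm3, h1, h2]) (by rw [hm2, hm4, h1, h2])
    · have := mside_unique T hT hi1
        ⟨hi2.1.symm, hi2.2.2, hi2.2.1⟩
        (by rw [hm1, hm4, h1, h2]) (by rw [hm2, hm3, h1, h2])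
      exact this.trans Sym2.eq_swap
  have hF : ∀ e : internalEdgeSet T.G,
      ∃ e' : internalEdgeSet T'.G, R e.1 e'.1 := fun ⟨e, he⟩ => by
    obtain ⟨e', h2, h1⟩ := hEX e he
    exact ⟨⟨e', h2⟩, h1⟩
  have hG : ∀ e' : internalEdgeSet T'.G,
      ∃ e : internalEdgeSet T.G, R e.1 e'.1 := fun ⟨e', he'⟩ => by
    obtain ⟨e, h2, h1⟩ := hEX' e' he'
    exact ⟨⟨e, h2⟩, h1⟩
  choose F hFspec using hF
  choose Ginv hGspec using hG
  have hli : Function.LeftInverse Ginv F := by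
    intro e
    exact Subtype.ext (hUN' (F e).1 _ _ (hGspec (F e)) (hFspec e))
  have hri : Function.RightInverse Ginv F := by
    intro e'
    exact Subtype.ext (hUN (Ginv e').1 _ _ (hFspec (Ginv e')) (hGspec e'))
  refine ⟨⟨F, Ginv, hli, hri⟩, ?_⟩
  intro u v h
  obtain ⟨u1, v1, u', v', hee, he', hi, hi', hm1, hm2⟩ :=
    hFspec ⟨s(u, v), ⟨u, v, rfl, h⟩⟩
  rcases Sym2.eq_iff.mp hee with ⟨h1, h2⟩ | ⟨h1, h2⟩
  · refine ⟨u', v', hi', he', ?_, ?_, ?_⟩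
    · rw [h1, h2]; exact hm1
    · rw [h1, h2]; exact hm2
    · exact delta_eq_of_msides h.1 hi'.1 (by rw [h1, h2]; exact hm1)
        (by rw [h1, h2]; exact hm2)
  · refine ⟨v', u', ⟨hi'.1.symm, hi'.2.2, hi'.2.1⟩,
      he'.trans Sym2.eq_swap, ?_, ?_, ?_⟩
    · rw [h1, h2]; exact hm2
    · rw [h1, h2]; exact hm1
    · exact delta_eq_of_msides h.1 hi'.1.symm (by rw [h1, h2]; exact hm2)
        (by rw [h1, h2]; exact hm1)
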